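/- arXiv:math-ph/0605032 — 9 statements merged into one kernel-verified Lean document; each statement's English description precedes it below -/
import Mathlib

section
/- (Lemma A.6, first part.) For every a, b ∈ 𝔪 one has ⟪[a, I a], [b, I b]⟫ = ‖[a, b]‖² + ‖[a, I b]‖². -/
open scoped RealInnerProductSpace

/-- **Lemma A.6, first part.** `𝔤` is a real Lie algebra (with bracket given by
the bilinear map `B`, antisymmetric and satisfying the Jacobi identity) which is also a real
inner product space whose inner product is invariant: `⟪[x,y], z⟫ = -⟪y, [x,z]⟫`.
With `𝔻`, `c`, `𝔪` and `I u = (1/c) • 𝔻 u` as in the setting of an irreducible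
Hermitian-symmetric affine coadjoint orbit of a compact-type `L*`-group, for all `a, b ∈ 𝔪`
one has `⟪[a, I a], [b, I b]⟫ = ‖[a, b]‖² + ‖[a, I b]‖²`. -/
theorem stmt2 (𝔤 : Type*) [NormedAddCommGroup 𝔤] [InnerProductSpace ℝ 𝔤]
    (B : 𝔤 →ₗ[ℝ] 𝔤 →ₗ[ℝ] 𝔤)
    (hanti : ∀ x y : 𝔤, B x y = -B y x)
    (hjac : ∀ x y z : 𝔤, B x (B y z) = B (B x y) z + B y (B x z))
    (hinv : ∀ x y z : 𝔤, ⟪B x y, z⟫ = -⟪y, B x z⟫)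
    (𝔻 : 𝔤 →ₗ[ℝ] 𝔤)
    (hder : ∀ x y : 𝔤, 𝔻 (B x y) = B (𝔻 x) y + B x (𝔻 y))
    (c : ℝ) (hc : 0 < c)
    (𝔪 : Submodule ℝ 𝔤)
    (hDm : ∀ u ∈ 𝔪, 𝔻 u ∈ 𝔪)
    (hD2 : ∀ u ∈ 𝔪, 𝔻 (𝔻 u) = -(c ^ 2) • u)
    (hbr : ∀ u ∈ 𝔪, ∀ v ∈ 𝔪, 𝔻 (B u v) = 0)
    (I : 𝔤 → 𝔤) (hI : ∀ u, I u = (1 / c) • 𝔻 u)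
    (a b : 𝔤) (ha : a ∈ 𝔪) (hb : b ∈ 𝔪) :
    ⟪B a (I a), B b (I b)⟫ = ‖B a b‖ ^ 2 + ‖B a (I b)‖ ^ 2 := by
  have hc' : c ≠ 0 := ne_of_gt hc
  -- I preserves 𝔪
  have hIm : ∀ u ∈ 𝔪, I u ∈ 𝔪 := fun u hu => by
    rw [hI]; exact 𝔪.smul_mem _ (hDm u hu)
  -- sum rule : for u v ∈ 𝔪, B (𝔻 u) v = - B u (𝔻 v)
  have hsum : ∀ u ∈ 𝔪, ∀ v ∈ 𝔪, B (𝔻 u) v = - B u (𝔻 v) := by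
    intro u hu v hv
    have h := hder u v
    rw [hbr u hu v hv] at h
    exact eq_neg_of_add_eq_zero_left h.symm
  -- key fact 1 : B b (I a) = B a (I b)
  have hba : B b (I a) = B a (I b) := by
    have h1 : B b (𝔻 a) = B a (𝔻 b) := by
      have := hsum b hb a ha
      rw [hanti (𝔻 b) a] at this
      -- this : - B a (𝔻 b) = - B b (𝔻 a)
      have := neg_injective this
      exact this.symm
    rw [hI, hI, LinearMap.map_smul, LinearMap.map_smul, h1]
  -- key fact 2 : B (I a) (I b) = B a b
  have hII : B (I a) (I b) = B a b := by
    have hDIa : 𝔻 (I a) = (-c) • a := by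
      rw [hI, LinearMap.map_smul, hD2 a ha, smul_smul]
      congr 1
      field_simp
    have h0 : 𝔻 (B (I a) b) = 0 := hbr _ (hIm a ha) b hb
    have h1 : B (𝔻 (I a)) b + B (I a) (𝔻 b) = 0 := by rw [← hder, h0]
    have h2 : B (I a) (𝔻 b) = c • B a b := by
      rw [hDIa, LinearMap.map_smul, LinearMap.smul_apply] at h1
      have : B (I a) (𝔻 b) = -((-c) • B a b) := eq_neg_of_add_eq_zero_right h1
      rw [this, neg_smul, neg_neg]
    have : B (I a) (I b) = (1 / c) • B (I a) (𝔻 b) := by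
      rw [hI b, LinearMap.map_smul]
    rw [this, h2, smul_smul]
    rw [one_div, inv_mul_cancel₀ hc', one_smul]
  -- expand via invariance and Jacobi
  have step1 : ⟪B a (I a), B b (I b)⟫
      = -⟪I a, B (B a b) (I b)⟫ + ⟪B b (I a), B a (I b)⟫ := by
    rw [hinv a (I a) (B b (I b)), hjac a b (I b), inner_add_right,
      hinv b (I a) (B a (I b))]
    ring
  have t2 : ⟪B b (I a), B a (I b)⟫ = ‖B a (I b)‖ ^ 2 := by
    rw [hba, ← real_inner_self_eq_norm_sq]
  have t1 : -⟪I a, B (B a b) (I b)⟫ = ‖B a b‖ ^ 2 := by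
    have e1 : ⟪B (B a b) (I a), I b⟫ = -⟪I a, B (B a b) (I b)⟫ :=
      hinv (B a b) (I a) (I b)
    have e2 : B (B a b) (I a) = - B (I a) (B a b) := hanti _ _
    have e3 : ⟪B (I a) (B a b), I b⟫ = -⟪B a b, B (I a) (I b)⟫ :=
      hinv (I a) (B a b) (I b)
    rw [← e1, e2, inner_neg_left, e3, neg_neg, hII, ← real_inner_self_eq_norm_sq]
  rw [step1, t1, t2]
end

section
/- (Lemma 6.3, iterate form: φ(ad(iIV)²)(V) = φ(I R_{IV,V})(V) on monomials.) Let J : 𝔤 → 𝔤 be a ℂ-linear map with J(x α) = y α and J(y α) = −x α for all α ∈ Ψ. Let v : Ψ → ℝ, set V := ∑_{α∈Ψ} v α • x α and W := ∑_{α∈Ψ} v α • y α. Then for every natural number n, the n-th iterate of the map z ↦ J([[W, V], z]) applied to V equals ∑_{α∈Ψ} (2·v α)^{2n} · v α • x α, which also equals (ad(i•W))^{2n}(V). -/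
/-- **Lemma 6.3, iterate form, on monomials.** With `J` the complex structure
(`J (x α) = y α`, `J (y α) = -x α`), `V = ∑ α, v α • x α` and `W = ∑ α, v α • y α`, for every
`n : ℕ` the `n`-th iterate of `z ↦ J [[W, V], z]` applied to `V` equals
`∑ α, (2 v α)^{2n} * v α • x α`, which also equals `(ad(i • W))^{2n}(V)`. -/
theorem stmt7 (𝔤 : Type*) [LieRing 𝔤] [LieAlgebra ℂ 𝔤]
    (Ψ : Type*) [Fintype Ψ]
    (x y h : Ψ → 𝔤)
    (hxy : ∀ α, ⁅x α, y α⁆ = (2 * Complex.I) • h α)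
    (hxy' : ∀ α β, α ≠ β → ⁅x α, y β⁆ = 0)
    (hhx : ∀ α, ⁅h α, x α⁆ = (-(2 * Complex.I)) • y α)
    (hhx' : ∀ α β, α ≠ β → ⁅h α, x β⁆ = 0)
    (hhy : ∀ α, ⁅h α, y α⁆ = (2 * Complex.I) • x α)
    (hhy' : ∀ α β, α ≠ β → ⁅h α, y β⁆ = 0)
    (J : 𝔤 →ₗ[ℂ] 𝔤)
    (hJx : ∀ α, J (x α) = y α)
    (hJy : ∀ α, J (y α) = -x α)
    (v : Ψ → ℝ) (V W : 𝔤)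
    (hV : V = ∑ α, (v α : ℂ) • x α)
    (hW : W = ∑ α, (v α : ℂ) • y α) :
    ∀ n : ℕ,
      (fun z => J ⁅⁅W, V⁆, z⁆)^[n] V =
          ∑ α, (((2 * v α) ^ (2 * n) * v α : ℝ) : ℂ) • x α ∧
      (fun z => J ⁅⁅W, V⁆, z⁆)^[n] V = (fun u => ⁅Complex.I • W, u⁆)^[2 * n] V := by
  -- basic brackets with W
  have lie_sum' : ∀ (z : 𝔤) (f : Ψ → 𝔤), ⁅z, ∑ α, f α⁆ = ∑ α, ⁅z, f α⁆ := fun z f =>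
    map_sum (LieAlgebra.ad ℂ 𝔤 z) f Finset.univ
  have sum_lie' : ∀ (z : 𝔤) (f : Ψ → 𝔤), ⁅∑ α, f α, z⁆ = ∑ α, ⁅f α, z⁆ := by
    intro z f
    rw [← lie_skew, lie_sum', ← Finset.sum_neg_distrib]
    exact Finset.sum_congr rfl fun α _ => lie_skew (f α) z
  have hWx : ∀ β, ⁅W, x β⁆ = ((-(2 * Complex.I)) * (v β : ℂ)) • h β := by
    intro β
    rw [hW, sum_lie' _ _, Finset.sum_eq_single β]
    · rw [smul_lie, ← lie_skew, hxy, smul_neg, smul_smul]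
      rw [← neg_smul]; ring_nf
    · intro α _ hne
      rw [smul_lie, ← lie_skew, hxy' β α (Ne.symm hne), neg_zero, smul_zero]
    · intro hβ; exact absurd (Finset.mem_univ β) hβ
  have hWh : ∀ β, ⁅W, h β⁆ = ((-(2 * Complex.I)) * (v β : ℂ)) • x β := by
    intro β
    rw [hW, sum_lie' _ _, Finset.sum_eq_single β]
    · rw [smul_lie, ← lie_skew, hhy, smul_neg, smul_smul]
      rw [← neg_smul]; ring_nf
    · intro α _ hne
      rw [smul_lie, ← lie_skew, hhy' β α (Ne.symm hne), neg_zero, smul_zero]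
    · intro hβ; exact absurd (Finset.mem_univ β) hβ
  have hIWx : ∀ β, ⁅Complex.I • W, x β⁆ = ((2 : ℂ) * (v β : ℂ)) • h β := by
    intro β
    rw [smul_lie, hWx, smul_smul]
    congr 1
    have : Complex.I * Complex.I = -1 := Complex.I_mul_I
    ring_nf
    rw [Complex.I_sq]; ring
  have hIWh : ∀ β, ⁅Complex.I • W, h β⁆ = ((2 : ℂ) * (v β : ℂ)) • x β := by
    intro β
    rw [smul_lie, hWh, smul_smul]
    congr 1
    ring_nf
    rw [Complex.I_sq]; ring
  -- the bracket [[W,V], x β]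
  have hWV : ⁅W, V⁆ = ∑ α, ((-(2 * Complex.I)) * (v α : ℂ) ^ 2) • h α := by
    rw [hV, lie_sum' _ _]
    refine Finset.sum_congr rfl fun α _ => ?_
    rw [lie_smul, hWx, smul_smul]
    ring_nf
  have hBr : ∀ β, ⁅⁅W, V⁆, x β⁆ = ((-4 : ℂ) * (v β : ℂ) ^ 2) • y β := by
    intro β
    rw [hWV, sum_lie' _ _, Finset.sum_eq_single β]
    · rw [smul_lie, hhx, smul_smul]
      congr 1
      ring_nf
      rw [Complex.I_sq]; ring
    · intro α _ hne
      rw [smul_lie, hhx' α β hne, smul_zero]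
    · intro hβ; exact absurd (Finset.mem_univ β) hβ
  -- step for the J-map on sums of x's
  have step1 : ∀ c : Ψ → ℂ,
      J ⁅⁅W, V⁆, ∑ α, c α • x α⁆ = ∑ α, ((4 : ℂ) * (v α : ℂ) ^ 2 * c α) • x α := by
    intro c
    rw [lie_sum' _ _, map_sum]
    refine Finset.sum_congr rfl fun α _ => ?_
    rw [lie_smul, hBr, map_smul, map_smul, hJy, smul_smul, smul_neg, ← neg_smul]
    congr 1; ring
  have step2 : ∀ c : Ψ → ℂ,
      ⁅Complex.I • W, ∑ α, c α • x α⁆ = ∑ α, ((2 : ℂ) * (v α : ℂ) * c α) • h α := by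
    intro c
    rw [lie_sum' _ _]
    refine Finset.sum_congr rfl fun α _ => ?_
    rw [lie_smul, hIWx, smul_smul]
    congr 1; ring
  have step3 : ∀ c : Ψ → ℂ,
      ⁅Complex.I • W, ∑ α, c α • h α⁆ = ∑ α, ((2 : ℂ) * (v α : ℂ) * c α) • x α := by
    intro c
    rw [lie_sum' _ _]
    refine Finset.sum_congr rfl fun α _ => ?_
    rw [lie_smul, hIWh, smul_smul]
    congr 1; ring
  -- first claim by induction
  have claim1 : ∀ n : ℕ, (fun z => J ⁅⁅W, V⁆, z⁆)^[n] V =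
      ∑ α, (((2 * v α) ^ (2 * n) * v α : ℝ) : ℂ) • x α := by
    intro n
    induction n with
    | zero => simpa using hV
    | succ n ih =>
      rw [Function.iterate_succ_apply', ih, step1]
      refine Finset.sum_congr rfl fun α _ => ?_
      congr 1
      push_cast
      ring
  -- second claim by induction
  have claim2 : ∀ n : ℕ, (fun u => ⁅Complex.I • W, u⁆)^[2 * n] V =
      ∑ α, (((2 * v α) ^ (2 * n) * v α : ℝ) : ℂ) • x α := by
    intro n
    induction n with
    | zero => simpa using hV
    | succ n ih =>
      have h2 : 2 * (n + 1) = (2 * n) + 1 + 1 := by ring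
      rw [h2, Function.iterate_succ_apply', Function.iterate_succ_apply', ih, step2, step3]
      refine Finset.sum_congr rfl fun α _ => ?_
      congr 1
      push_cast
      ring
  intro n
  exact ⟨claim1 n, (claim1 n).trans (claim2 n).symm⟩
end

section
/- (Computation in the proof of Theorem 5.1.) Let a : Ψ → ℝ, set A := ∑_{α∈Ψ} a α • x α and B := ∑_{α∈Ψ} a α • y α. Then for every natural number n, (ad(i•A))^{2n}(B) = ∑_{α∈Ψ} (2·a α)^{2n} · a α • y α, where ad(z)(u) := [z, u]. -/
lemma sum_lie_aux {𝔤 : Type*} [LieRing 𝔤] [LieAlgebra ℂ 𝔤] {ι : Type*}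
    (s : Finset ι) (f : ι → 𝔤) (m : 𝔤) :
    ⁅∑ i ∈ s, f i, m⁆ = ∑ i ∈ s, ⁅f i, m⁆ := by
  induction s using Finset.cons_induction with
  | empty => simp
  | cons i s hi ih => simp [Finset.sum_cons, add_lie, ih]

/-- **computation in the proof of Theorem 5.1.** With `A = ∑ α, a α • x α` and
`B = ∑ α, a α • y α`, for every `n : ℕ` one has
`(ad(i • A))^{2n}(B) = ∑ α, (2 a α)^{2n} * a α • y α`, where `ad z u = [z, u]`. -/
theorem stmt8 (𝔤 : Type*) [LieRing 𝔤] [LieAlgebra ℂ 𝔤]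
    (Ψ : Type*) [Fintype Ψ]
    (x y h : Ψ → 𝔤)
    (hxy : ∀ α, ⁅x α, y α⁆ = (2 * Complex.I) • h α)
    (hxy' : ∀ α β, α ≠ β → ⁅x α, y β⁆ = 0)
    (hhx : ∀ α, ⁅h α, x α⁆ = (-(2 * Complex.I)) • y α)
    (hhx' : ∀ α β, α ≠ β → ⁅h α, x β⁆ = 0)
    (hhy : ∀ α, ⁅h α, y α⁆ = (2 * Complex.I) • x α)
    (hhy' : ∀ α β, α ≠ β → ⁅h α, y β⁆ = 0)
    (a : Ψ → ℝ) (A B : 𝔤)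
    (hA : A = ∑ α, (a α : ℂ) • x α)
    (hB : B = ∑ α, (a α : ℂ) • y α) :
    ∀ n : ℕ,
      (fun u => ⁅Complex.I • A, u⁆)^[2 * n] B =
        ∑ α, (((2 * a α) ^ (2 * n) * a α : ℝ) : ℂ) • y α := by

  intro n
  have hext : (fun u => ⁅Complex.I • A, u⁆) = ⇑(LieAlgebra.ad ℂ 𝔤 (Complex.I • A)) := rfl
  rw [hext]
  set g := LieAlgebra.ad ℂ 𝔤 (Complex.I • A) with hg
  have hgapp : ∀ u, g u = ⁅Complex.I • A, u⁆ := fun u => rfl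
  have hsum : ∀ (c : Ψ → ℂ) (z : Ψ → 𝔤), g (∑ α, c α • z α) = ∑ α, c α • g (z α) := by
    intro c z
    rw [map_sum]
    exact Finset.sum_congr rfl fun α _ => (map_smul g (c α) (z α))
  have hgy : ∀ β, g (y β) = (-2 * (a β : ℂ)) • h β := by
    intro β
    rw [hgapp, hA, smul_lie, sum_lie_aux Finset.univ _ _]
    rw [Finset.sum_eq_single β]
    · rw [smul_lie, hxy β, smul_smul, smul_smul]
      congr 1
      linear_combination (2 * (a β : ℂ)) * Complex.I_sq
    · intro α _ hab
      rw [smul_lie, hxy' α β hab, smul_zero]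
    · intro hβ; exact absurd (Finset.mem_univ β) hβ
  have hgh : ∀ β, g (h β) = (-2 * (a β : ℂ)) • y β := by
    intro β
    rw [hgapp, hA, smul_lie, sum_lie_aux Finset.univ _ _]
    rw [Finset.sum_eq_single β]
    · rw [smul_lie, ← lie_skew, hhx β]
      simp only [neg_smul, smul_neg, neg_neg, smul_smul]
      congr 1
      linear_combination (2 * (a β : ℂ)) * Complex.I_sq
    · intro α _ hab
      rw [smul_lie, ← lie_skew, hhx' β α hab.symm, neg_zero, smul_zero]
    · intro hβ; exact absurd (Finset.mem_univ β) hβ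
  induction n with
  | zero =>
    simp only [Nat.mul_zero, Function.iterate_zero, id_eq, hB, pow_zero, one_mul]
  | succ n ih =>
    have h2 : 2 * (n + 1) = 2 + 2 * n := by ring
    rw [h2, Function.iterate_add_apply, ih]
    rw [show (2 : ℕ) = 1 + 1 from rfl, Function.iterate_add_apply,
      Function.iterate_one, hsum]
    simp only [hgy]
    rw [hsum]
    simp only [map_smul, hgh, smul_smul]
    apply Finset.sum_congr rfl
    intro α _
    congr 1
    push_cast
    ring
end

section
/- (Explicit formula for the map f₁ on the maximal abelian subalgebra, from the proof of Theorem 5.1: (sinh ad(ia)/ad(ia))(Ia) = ∑_α (sinh(2a_α)/2)·y_α.) Let a : Ψ → ℝ, set A := ∑_{α∈Ψ} a α • x α and B := ∑_{α∈Ψ} a α • y α. Then the series with n-th term (1/(2n+1)!) • (ad(i•A))^{2n}(B) has sum ∑_{α∈Ψ} (sinh(2·a α)/2) • y α in 𝔤. -/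
/-- **explicit formula for `f₁`, proof of Theorem 5.1.** `𝔤` is a complex Lie
algebra (bracket given by the bilinear map `B`, antisymmetric and Jacobi) which is also a
normed `ℂ`-vector space.  With `A = ∑ α, a α • x α` and `Bv = ∑ α, a α • y α`, the series
with `n`-th term `(1/(2n+1)!) • (ad(i • A))^{2n}(Bv)` has sum
`∑ α, (sinh(2 a α)/2) • y α`, i.e. `(sinh ad(ia)/ad(ia))(Ia) = ∑ α (sinh(2a_α)/2) • y_α`. -/
theorem stmt9 (𝔤 : Type*) [NormedAddCommGroup 𝔤] [NormedSpace ℂ 𝔤]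
    (B : 𝔤 →ₗ[ℂ] 𝔤 →ₗ[ℂ] 𝔤)
    (hanti : ∀ u v : 𝔤, B u v = -B v u)
    (hjac : ∀ u v w : 𝔤, B u (B v w) = B (B u v) w + B v (B u w))
    (Ψ : Type*) [Fintype Ψ]
    (x y h : Ψ → 𝔤)
    (hxy : ∀ α, B (x α) (y α) = (2 * Complex.I) • h α)
    (hxy' : ∀ α β, α ≠ β → B (x α) (y β) = 0)
    (hhx : ∀ α, B (h α) (x α) = (-(2 * Complex.I)) • y α)
    (hhx' : ∀ α β, α ≠ β → B (h α) (x β) = 0)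
    (hhy : ∀ α, B (h α) (y α) = (2 * Complex.I) • x α)
    (hhy' : ∀ α β, α ≠ β → B (h α) (y β) = 0)
    (a : Ψ → ℝ) (A Bv : 𝔤)
    (hA : A = ∑ α, (a α : ℂ) • x α)
    (hB : Bv = ∑ α, (a α : ℂ) • y α) :
    HasSum
      (fun n : ℕ =>
        ((1 / (Nat.factorial (2 * n + 1)) : ℝ) : ℂ) •
          (fun u => B (Complex.I • A) u)^[2 * n] Bv)
      (∑ α, ((Real.sinh (2 * a α) / 2 : ℝ) : ℂ) • y α) := by
  set T : 𝔤 →ₗ[ℂ] 𝔤 := B (Complex.I • A) with hT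
  have hTy : ∀ β, T (y β) = ((-2 * a β : ℝ) : ℂ) • h β := by
    intro β
    rw [hT, hA, map_smul, LinearMap.smul_apply]
    rw [map_sum]
    simp only [LinearMap.coe_sum, Finset.sum_apply, map_smul, LinearMap.smul_apply]
    rw [Finset.sum_eq_single β]
    · rw [hxy, smul_smul, smul_smul]
      congr 1
      push_cast
      ring_nf
      rw [Complex.I_sq]
      ring
    · intro α _ hne
      rw [hxy' α β hne]
      simp
    · simp
  have hTh : ∀ β, T (h β) = ((-2 * a β : ℝ) : ℂ) • y β := by
    intro β
    rw [hT, hA, map_smul, LinearMap.smul_apply]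
    rw [map_sum]
    simp only [LinearMap.coe_sum, Finset.sum_apply, map_smul, LinearMap.smul_apply]
    rw [Finset.sum_eq_single β]
    · rw [hanti, hhx]
      simp only [neg_smul, smul_neg, neg_neg, smul_smul]
      congr 1
      push_cast
      ring_nf
      rw [Complex.I_sq]
      ring
    · intro α _ hne
      rw [hanti, hhx' β α hne.symm]
      simp
    · simp
  have key : ∀ n : ℕ, (fun u => T u)^[2 * n] Bv
      = ∑ β, ((((2 * a β : ℝ) : ℂ)) ^ (2 * n) * (a β : ℂ)) • y β := by
    intro n
    induction n with
    | zero => simpa using hB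
    | succ n ih =>
      have h2 : 2 * (n + 1) = (2 * n + 1) + 1 := by ring
      rw [h2, Function.iterate_succ_apply', Function.iterate_succ_apply', ih]
      simp only [map_sum, map_smul, hTy, hTh, smul_smul]
      refine Finset.sum_congr rfl fun β _ => ?_
      congr 1
      push_cast
      ring
  have heq : (fun n : ℕ =>
        ((1 / (Nat.factorial (2 * n + 1)) : ℝ) : ℂ) •
          (fun u => T u)^[2 * n] Bv)
      = fun n : ℕ => ∑ β, ((((2 * a β : ℝ) : ℂ)) ^ (2 * n + 1) / (Nat.factorial (2 * n + 1)) / 2) • y β := by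
    funext n
    rw [key n, Finset.smul_sum]
    refine Finset.sum_congr rfl fun β _ => ?_
    rw [smul_smul]
    congr 1
    have hfac : ((Nat.factorial (2 * n + 1) : ℝ) : ℂ) ≠ 0 := by
      simp [Nat.factorial_ne_zero]
    push_cast
    push_cast at hfac
    field_simp
    ring
  rw [heq]
  refine hasSum_sum fun β _ => ?_
  have hs := (Complex.hasSum_sinh (((2 * a β : ℝ) : ℂ))).div_const 2
  have htarget : ((Real.sinh (2 * a β) / 2 : ℝ) : ℂ) = Complex.sinh (((2 * a β : ℝ) : ℂ)) / 2 := by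
    push_cast [Complex.ofReal_sinh]
    ring
  rw [htarget]
  exact hs.smul_const (y β)
end

section
/- (Lemma 6.1, on the maximal abelian subalgebra: ((cosh ad(ia) − 1)/ad(ia)²)([Ia, a]) = ((√(1 + ad(iV)²) − 1)/ad(iV)²)([IV, V]).) Let a : Ψ → ℝ, set A := ∑_{α∈Ψ} a α • x α and B := ∑_{α∈Ψ} a α • y α, and for each α set v α := sinh(2·a α)/2. Then the series with n-th term (1/(2n+2)!) • (ad(i•A))^{2n}([B, A]) has sum (−i/2) • ∑_{α∈Ψ} (√(1 + 4·(v α)²) − 1) • h α in 𝔤. -/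
/-- **Lemma 6.1 on the maximal abelian subalgebra.** `𝔤` is a complex Lie
algebra (bracket given by the bilinear map `B`, antisymmetric and Jacobi) which is also a
normed `ℂ`-vector space.  With `A = ∑ α, a α • x α`, `Bv = ∑ α, a α • y α` and
`v α = sinh(2 a α)/2`, the series with `n`-th term
`(1/(2n+2)!) • (ad(i • A))^{2n}([Bv, A])` has sum
`(-i/2) • ∑ α, (√(1 + 4 (v α)²) - 1) • h α`. -/
theorem stmt10 (𝔤 : Type*) [NormedAddCommGroup 𝔤] [NormedSpace ℂ 𝔤]
    (B : 𝔤 →ₗ[ℂ] 𝔤 →ₗ[ℂ] 𝔤)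
    (hanti : ∀ u v : 𝔤, B u v = -B v u)
    (hjac : ∀ u v w : 𝔤, B u (B v w) = B (B u v) w + B v (B u w))
    (Ψ : Type*) [Fintype Ψ]
    (x y h : Ψ → 𝔤)
    (hxy : ∀ α, B (x α) (y α) = (2 * Complex.I) • h α)
    (hxy' : ∀ α β, α ≠ β → B (x α) (y β) = 0)
    (hhx : ∀ α, B (h α) (x α) = (-(2 * Complex.I)) • y α)
    (hhx' : ∀ α β, α ≠ β → B (h α) (x β) = 0)
    (hhy : ∀ α, B (h α) (y α) = (2 * Complex.I) • x α)
    (hhy' : ∀ α β, α ≠ β → B (h α) (y β) = 0)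
    (a v : Ψ → ℝ) (A Bv : 𝔤)
    (hA : A = ∑ α, (a α : ℂ) • x α)
    (hB : Bv = ∑ α, (a α : ℂ) • y α)
    (hv : ∀ α, v α = Real.sinh (2 * a α) / 2) :
    HasSum
      (fun n : ℕ =>
        ((1 / (Nat.factorial (2 * n + 2)) : ℝ) : ℂ) •
          (fun u => B (Complex.I • A) u)^[2 * n] (B Bv A))
      ((-Complex.I / 2) •
        ∑ α, ((Real.sqrt (1 + 4 * v α ^ 2) - 1 : ℝ) : ℂ) • h α) := by
  classical
  set f : 𝔤 → 𝔤 := fun u => B (Complex.I • A) u with hf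
  -- basic brackets
  have hxh : ∀ α β : Ψ, B (x β) (h α) = if β = α then (2 * Complex.I) • y α else 0 := by
    intro α β
    by_cases hc : β = α
    · subst hc; rw [hanti, hhx, if_pos rfl, neg_smul, neg_neg]
    · rw [hanti, hhx' α β (Ne.symm hc), if_neg hc, neg_zero]
  have hxyif : ∀ α β : Ψ, B (x β) (y α) = if β = α then (2 * Complex.I) • h α else 0 := by
    intro α β
    by_cases hc : β = α
    · subst hc; rw [hxy, if_pos rfl]
    · rw [hxy' β α hc, if_neg hc]
  have hyxif : ∀ α β : Ψ, B (y β) (x α) = if β = α then (-(2 * Complex.I)) • h α else 0 := by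
    intro α β
    by_cases hc : β = α
    · subst hc; rw [hanti, hxy, if_pos rfl, neg_smul]
    · rw [hanti, hxy' α β (Ne.symm hc), if_neg hc, neg_zero]
  -- action of ad(i•A)
  have had : ∀ z : 𝔤, f z = Complex.I • ∑ β, (a β : ℂ) • B (x β) z := by
    intro z
    simp only [hf, hA, map_smul, map_sum, LinearMap.smul_apply, LinearMap.sum_apply,
      Finset.smul_sum]
  have hfh : ∀ α, f (h α) = (-2 * (a α : ℂ)) • y α := by
    intro α
    rw [had]
    simp only [hxh, smul_ite, smul_zero, Finset.sum_ite_eq', Finset.mem_univ, if_true]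
    rw [smul_smul, smul_smul]
    congr 1
    linear_combination (2 * (a α : ℂ)) * Complex.I_mul_I
  have hfy : ∀ α, f (y α) = (-2 * (a α : ℂ)) • h α := by
    intro α
    rw [had]
    simp only [hxyif, smul_ite, smul_zero, Finset.sum_ite_eq', Finset.mem_univ, if_true]
    rw [smul_smul, smul_smul]
    congr 1
    linear_combination (2 * (a α : ℂ)) * Complex.I_mul_I
  have hlin : ∀ (c : ℂ) (z : 𝔤), f (c • z) = c • f z := by
    intro c z; exact (B (Complex.I • A)).map_smul c z
  have hsum : ∀ (g : Ψ → 𝔤), f (∑ α, g α) = ∑ α, f (g α) := by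
    intro g; exact map_sum (B (Complex.I • A)) g Finset.univ
  -- double iteration
  have hff : ∀ α, f (f (h α)) = ((2 * (a α : ℂ)) ^ 2) • h α := by
    intro α
    rw [hfh, hlin, hfy, smul_smul]
    congr 1; ring
  -- compute [Bv, A]
  have hBvA : B Bv A = ∑ α, ((a α : ℂ) ^ 2 * (-(2 * Complex.I))) • h α := by
    rw [hB, hA]
    simp only [map_sum, map_smul, LinearMap.sum_apply, LinearMap.smul_apply, Finset.smul_sum,
      hyxif, smul_ite, smul_zero, Finset.sum_ite_eq', Finset.mem_univ, if_true, smul_smul]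
    refine Finset.sum_congr rfl fun α _ => ?_
    congr 1; ring
  -- the n-th term
  have hterm : ∀ n : ℕ,
      ((1 / (Nat.factorial (2 * n + 2)) : ℝ) : ℂ) • f^[2 * n] (B Bv A)
        = ∑ α, ((-Complex.I / 2) * ((2 * (a α : ℂ)) ^ (2 * (n + 1)) / ((2 * (n + 1)).factorial : ℂ)))
            • h α := by
    intro n
    have hiter_sum : f^[2 * n] (B Bv A)
        = ∑ α, (((a α : ℂ) ^ 2 * (-(2 * Complex.I))) * (((2 * (a α : ℂ)) ^ 2) ^ n)) • h α := by
      rw [hBvA]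
      induction n with
      | zero => simp
      | succ n ih =>
        have h2 : 2 * (n + 1) = (2 * n) + 1 + 1 := by ring
        rw [h2, Function.iterate_succ_apply', Function.iterate_succ_apply', ih, hsum]
        simp only [hlin, hfh, smul_smul]
        rw [hsum]
        simp only [hlin, hfy, smul_smul]
        refine Finset.sum_congr rfl fun α _ => ?_
        congr 1; ring
    rw [hiter_sum, Finset.smul_sum]
    refine Finset.sum_congr rfl fun α _ => ?_
    rw [smul_smul]
    congr 1
    have hfac : ((2 * n + 2).factorial : ℂ) ≠ 0 := Nat.cast_ne_zero.mpr (Nat.factorial_ne_zero _)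
    have h2 : 2 * (n + 1) = 2 * n + 2 := by ring
    rw [pow_mul, pow_succ, h2]
    push_cast
    field_simp
    ring
  -- scalar series for each α
  have hscal : ∀ α : Ψ, HasSum
      (fun n : ℕ => (-Complex.I / 2) * ((2 * (a α : ℂ)) ^ (2 * (n + 1)) / ((2 * (n + 1)).factorial : ℂ)))
      ((-Complex.I / 2) * (((Real.sqrt (1 + 4 * v α ^ 2) - 1 : ℝ)) : ℂ)) := by
    intro α
    have hcosh := Complex.hasSum_cosh (2 * (a α : ℂ))
    have hshift : HasSum (fun n : ℕ => (2 * (a α : ℂ)) ^ (2 * (n + 1)) / ((2 * (n + 1)).factorial : ℂ))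
        (Complex.cosh (2 * (a α : ℂ)) - 1) := by
      refine (hasSum_nat_add_iff
        (f := fun n : ℕ => (2 * (a α : ℂ)) ^ (2 * n) / ((2 * n).factorial : ℂ)) 1).mpr ?_
      convert hcosh using 1
      · rfl
      · simp
    have hsqrt : ((Real.sqrt (1 + 4 * v α ^ 2) - 1 : ℝ) : ℂ)
        = Complex.cosh (2 * (a α : ℂ)) - 1 := by
      have h1 : (1 : ℝ) + 4 * v α ^ 2 = Real.cosh (2 * a α) ^ 2 := by
        rw [hv, Real.cosh_sq']; ring
      have h2 : Real.sqrt (1 + 4 * v α ^ 2) = Real.cosh (2 * a α) := by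
        rw [h1, Real.sqrt_sq (Real.cosh_pos _).le]
      rw [h2, Complex.ofReal_sub, Complex.ofReal_one, Complex.ofReal_cosh,
        Complex.ofReal_mul, Complex.ofReal_ofNat]
    rw [hsqrt]
    exact hshift.mul_left _
  -- put everything together
  have hmain : HasSum
      (fun n : ℕ => ∑ α, ((-Complex.I / 2) *
          ((2 * (a α : ℂ)) ^ (2 * (n + 1)) / ((2 * (n + 1)).factorial : ℂ))) • h α)
      (∑ α, ((-Complex.I / 2) * (((Real.sqrt (1 + 4 * v α ^ 2) - 1 : ℝ)) : ℂ)) • h α) :=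
    hasSum_sum fun α _ => (hscal α).smul_const (h α)
  have hgoal : ((-Complex.I / 2) •
      ∑ α, ((Real.sqrt (1 + 4 * v α ^ 2) - 1 : ℝ) : ℂ) • h α)
      = ∑ α, ((-Complex.I / 2) * (((Real.sqrt (1 + 4 * v α ^ 2) - 1 : ℝ)) : ℂ)) • h α := by
    rw [Finset.smul_sum]
    refine Finset.sum_congr rfl fun α _ => ?_
    rw [smul_smul]
  rw [hgoal]
  exact hmain.congr_fun fun n => hterm n
end

section
/- (Diagonalization of the endomorphism A_V of Theorem 6.1 on strongly orthogonal root vectors.) Let J : 𝔤 → 𝔤 be a ℂ-linear map with J(x α) = y α and J(y α) = −x α for all α ∈ Ψ. Let w : Ψ → ℝ and set V := ∑_{α∈Ψ} w α • x α and W := ∑_{α∈Ψ} w α • y α. Then for every β ∈ Ψ: x β + J([[W, V], x β]) = (1 + 4·(w β)²) • x β, and y β + J([[W, V], y β]) = (1 + 4·(w β)²) • y β. -/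

private lemma my_sum_lie {L : Type*} [LieRing L] {ι : Type*} (s : Finset ι) (f : ι → L) (z : L) :
    ⁅∑ i ∈ s, f i, z⁆ = ∑ i ∈ s, ⁅f i, z⁆ :=
  map_sum (AddMonoidHom.mk' (fun u => ⁅u, z⁆) (fun a b => add_lie a b z)) f s

private lemma my_lie_sum {L : Type*} [LieRing L] {ι : Type*} (s : Finset ι) (f : ι → L) (z : L) :
    ⁅z, ∑ i ∈ s, f i⁆ = ∑ i ∈ s, ⁅z, f i⁆ :=
  map_sum (AddMonoidHom.mk' (fun u => ⁅z, u⁆) (fun a b => lie_add z a b)) f s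

/-- **diagonalization of the endomorphism `A_V` of Theorem 6.1.** With `J` the
complex structure (`J (x α) = y α`, `J (y α) = -x α`), `V = ∑ α, w α • x α` and
`W = ∑ α, w α • y α`, for every `β`:
`x β + J [[W, V], x β] = (1 + 4 (w β)²) • x β` and
`y β + J [[W, V], y β] = (1 + 4 (w β)²) • y β`. -/
theorem stmt11 (𝔤 : Type*) [LieRing 𝔤] [LieAlgebra ℂ 𝔤]
    (Ψ : Type*) [Fintype Ψ]
    (x y h : Ψ → 𝔤)
    (hxy : ∀ α, ⁅x α, y α⁆ = (2 * Complex.I) • h α)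
    (hxy' : ∀ α β, α ≠ β → ⁅x α, y β⁆ = 0)
    (hhx : ∀ α, ⁅h α, x α⁆ = (-(2 * Complex.I)) • y α)
    (hhx' : ∀ α β, α ≠ β → ⁅h α, x β⁆ = 0)
    (hhy : ∀ α, ⁅h α, y α⁆ = (2 * Complex.I) • x α)
    (hhy' : ∀ α β, α ≠ β → ⁅h α, y β⁆ = 0)
    (J : 𝔤 →ₗ[ℂ] 𝔤)
    (hJx : ∀ α, J (x α) = y α)
    (hJy : ∀ α, J (y α) = -x α)
    (w : Ψ → ℝ) (V W : 𝔤)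
    (hV : V = ∑ α, (w α : ℂ) • x α)
    (hW : W = ∑ α, (w α : ℂ) • y α) :
    ∀ β : Ψ,
      x β + J ⁅⁅W, V⁆, x β⁆ = ((1 + 4 * w β ^ 2 : ℝ) : ℂ) • x β ∧
      y β + J ⁅⁅W, V⁆, y β⁆ = ((1 + 4 * w β ^ 2 : ℝ) : ℂ) • y β := by
  classical
  have hWV : ⁅W, V⁆ = ∑ α, (-(2 * Complex.I) * (w α : ℂ)^2) • h α := by
    subst hV hW
    rw [my_sum_lie]
    refine Finset.sum_congr rfl fun α _ => ?_
    rw [my_lie_sum, Finset.sum_eq_single α]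
    · have hyx : ⁅y α, x α⁆ = -((2 * Complex.I) • h α) := by
        rw [← hxy α, ← lie_skew]
      rw [smul_lie, lie_smul, hyx]
      simp only [smul_neg, smul_smul, ← neg_smul]
      congr 1; ring
    · intro γ _ hγ
      have hyx : ⁅y α, x γ⁆ = 0 := by
        rw [← neg_eq_zero, lie_skew, hxy' γ α (by simpa using hγ)]
      rw [smul_lie, lie_smul, hyx]
      simp
    · simp
  intro β
  have hx : ⁅⁅W, V⁆, x β⁆ = (-(4 : ℂ) * (w β : ℂ)^2) • y β := by
    rw [hWV, my_sum_lie, Finset.sum_eq_single β]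
    · rw [smul_lie, hhx, smul_smul]
      congr 1; ring_nf; rw [Complex.I_sq]; ring
    · intro γ _ hγ
      rw [smul_lie, hhx' γ β hγ, smul_zero]
    · simp
  have hy : ⁅⁅W, V⁆, y β⁆ = ((4 : ℂ) * (w β : ℂ)^2) • x β := by
    rw [hWV, my_sum_lie, Finset.sum_eq_single β]
    · rw [smul_lie, hhy, smul_smul]
      congr 1; ring_nf; rw [Complex.I_sq]; ring
    · intro γ _ hγ
      rw [smul_lie, hhy' γ β hγ, smul_zero]
    · simp
  constructor
  · rw [hx, map_smul, hJy, smul_neg, ← neg_smul]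
    push_cast
    rw [add_smul, one_smul]
    ring_nf
  · rw [hy, map_smul, hJx]
    push_cast
    rw [add_smul, one_smul]
end

section
/- (Spectral bound used in the proof of Theorem 5.1: the eigenvalues of sinh(ad(ia))/ad(ia) are ≥ 1, hence this operator is injective.) The series ∑_{n=0}^∞ (1/(2n+1)!) • T^{2n} converges in the operator norm to a continuous linear operator S (the operator sinh(T)/T), and for every w ∈ H one has re ⟪S w, w⟫ ≥ ‖w‖². In particular S w = 0 implies w = 0. -/
open scoped InnerProductSpace

/-- **spectral bound, proof of Theorem 5.1.** For a bounded self-adjoint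
operator `T` on a complex Hilbert space `H`, the series `∑ (1/(2n+1)!) • T^{2n}` converges
in operator norm to a continuous linear operator `S = sinh(T)/T`, one has
`re ⟪S w, w⟫ ≥ ‖w‖²` for every `w`, and `S w = 0` implies `w = 0`. -/
theorem stmt12 (H : Type*) [NormedAddCommGroup H] [InnerProductSpace ℂ H] [CompleteSpace H]
    (T : H →L[ℂ] H) (hT : IsSelfAdjoint T) :
    ∃ S : H →L[ℂ] H,
      HasSum (fun n : ℕ => ((1 / (Nat.factorial (2 * n + 1)) : ℝ) : ℂ) • T ^ (2 * n)) S ∧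
      (∀ w : H, ‖w‖ ^ 2 ≤ (⟪S w, w⟫_ℂ).re) ∧
      (∀ w : H, S w = 0 → w = 0) := by
  set f := fun n : ℕ => ((1 / (Nat.factorial (2 * n + 1)) : ℝ) : ℂ) • T ^ (2 * n) with hf
  have hsum : Summable f := by
    apply Summable.of_norm
    have hg : Summable fun n : ℕ => ‖T‖ ^ (2 * n) / (Nat.factorial (2 * n)) :=
      (Real.summable_pow_div_factorial ‖T‖).comp_injective
        (fun a b h => by omega)
    refine hg.of_nonneg_of_le (fun n => norm_nonneg _) (fun n => ?_)
    rw [hf]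
    simp only [norm_smul, Complex.norm_real, Real.norm_eq_abs]
    calc |(1 / (Nat.factorial (2 * n + 1)) : ℝ)| * ‖T ^ (2 * n)‖
        ≤ (1 / (Nat.factorial (2 * n)) : ℝ) * ‖T‖ ^ (2 * n) := by
          apply mul_le_mul
          · rw [abs_of_nonneg (by positivity)]
            apply one_div_le_one_div_of_le (by exact_mod_cast Nat.factorial_pos _)
            exact_mod_cast Nat.factorial_le (by omega)
          · rcases Nat.eq_zero_or_pos (2 * n) with h | h
            · simp only [h, pow_zero]
              exact le_of_le_of_eq ContinuousLinearMap.norm_id_le rfl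
            · exact norm_pow_le' _ h
          · exact norm_nonneg _
          · positivity
      _ = ‖T‖ ^ (2 * n) / (Nat.factorial (2 * n)) := by ring
  obtain ⟨S, hS⟩ := hsum
  have key : ∀ w : H, ‖w‖ ^ 2 ≤ (⟪S w, w⟫_ℂ).re := by
    intro w
    have hSw : HasSum (fun n => f n w) (S w) := hS.mapL (ContinuousLinearMap.apply ℂ H w)
    set ψ : H →L[ℝ] ℝ := Complex.reCLM.comp ((innerSL ℂ w).restrictScalars ℝ)
    have hre : HasSum (fun n => ψ (f n w)) (ψ (S w)) := hSw.mapL ψ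
    have hterm : ∀ n, ψ (f n w) = (1 / (Nat.factorial (2 * n + 1)) : ℝ) * ‖(T ^ n) w‖ ^ 2 := by
      intro n
      have h2n : (T ^ (2 * n)) w = (T ^ n) ((T ^ n) w) := by
        rw [two_mul, pow_add]; rfl
      have hadj : ⟪w, (T ^ (2 * n)) w⟫_ℂ = ⟪(T ^ n) w, (T ^ n) w⟫_ℂ := by
        rw [h2n, ← ContinuousLinearMap.adjoint_inner_left, (hT.pow n).adjoint_eq]
      simp only [ψ, hf, ContinuousLinearMap.coe_comp', Function.comp_apply,
        ContinuousLinearMap.coe_restrictScalars', innerSL_apply_apply, ContinuousLinearMap.smul_apply,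
        inner_smul_right, hadj]
      rw [inner_self_eq_norm_sq_to_K]
      simp [Complex.mul_re]
      left
      norm_cast
    have h0 : ψ (f 0 w) = ‖w‖ ^ 2 := by
      rw [hterm 0]; simp
    have hle : ‖w‖ ^ 2 ≤ ψ (S w) := by
      rw [← h0]
      refine le_hasSum hre 0 (fun n _ => ?_)
      rw [hterm n]; positivity
    have : ψ (S w) = (⟪S w, w⟫_ℂ).re := by
      simp only [ψ, ContinuousLinearMap.coe_comp', Function.comp_apply,
        ContinuousLinearMap.coe_restrictScalars', innerSL_apply_apply, Complex.reCLM_apply]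
      rw [← inner_conj_symm (S w) w, Complex.conj_re]
    linarith [this ▸ hle]
  refine ⟨S, hS, key, fun w hw => ?_⟩
  have h := key w
  rw [hw] at h
  simp only [inner_zero_left, Complex.zero_re] at h
  have : ‖w‖ = 0 := by nlinarith [norm_nonneg w]
  exact norm_eq_zero.mp this
end

section
/- (Operator bound used in the uniqueness argument of Theorem 3.1: the Hermitian operator (1 − cos(T))/T² has norm at most 1.) The series ∑_{n=0}^∞ ((−1)^n/(2n+2)!) • T^{2n} converges in the operator norm to a continuous linear operator C (the operator (1 − cos T)/T²), and for every w ∈ H one has 0 ≤ re ⟪C w, w⟫ ≤ (1/2)·‖w‖². -/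
open scoped InnerProductSpace
open MeasureTheory NormedSpace

section Stmt14Aux
variable {H : Type*} [NormedAddCommGroup H] [InnerProductSpace ℂ H] [CompleteSpace H]

noncomputable instance stmt14QAlg : NormedAlgebra ℚ (H →L[ℂ] H) := NormedAlgebra.restrictScalars ℚ ℂ _

noncomputable def stmt14U (T : H →L[ℂ] H) (a : ℝ) : H →L[ℂ] H :=
  exp ((Complex.I * a) • T)

lemma stmt14U_mul (T : H →L[ℂ] H) (a b : ℝ) :
    stmt14U T a * stmt14U T b = stmt14U T (a + b) := by
  rw [stmt14U, stmt14U, stmt14U, ← exp_add_of_commute ((Commute.refl T).smul_left _ |>.smul_right _)]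
  congr 1
  rw [← add_smul]
  congr 1
  push_cast; ring

lemma stmt14U_star (T : H →L[ℂ] H) (hT : IsSelfAdjoint T) (a : ℝ) :
    star (stmt14U T a) = stmt14U T (-a) := by
  rw [stmt14U, stmt14U, star_exp]
  congr 1
  rw [star_smul, hT.star_eq]
  congr 1
  simp only [star_mul', Complex.star_def, Complex.conj_I, Complex.conj_ofReal]
  push_cast; ring

lemma stmt14U_norm (T : H →L[ℂ] H) (hT : IsSelfAdjoint T) (a : ℝ) (w : H) :
    ‖stmt14U T a w‖ = ‖w‖ := by
  have h1 : ContinuousLinearMap.adjoint (stmt14U T a) * stmt14U T a = 1 := by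
    rw [← ContinuousLinearMap.star_eq_adjoint, stmt14U_star T hT, stmt14U_mul]
    simpa [stmt14U] using exp_zero (𝔸 := H →L[ℂ] H)
  have h2 : ⟪stmt14U T a w, stmt14U T a w⟫_ℂ = ⟪w, w⟫_ℂ := by
    rw [← ContinuousLinearMap.adjoint_inner_left]
    have : ContinuousLinearMap.adjoint (stmt14U T a) (stmt14U T a w)
        = (ContinuousLinearMap.adjoint (stmt14U T a) * stmt14U T a) w := rfl
    rw [this, h1]; rfl
  rw [@norm_eq_sqrt_re_inner ℂ, @norm_eq_sqrt_re_inner ℂ _ _ _ _ w, h2]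


lemma stmt14U_cont (T : H →L[ℂ] H) : Continuous fun a : ℝ => stmt14U T a := by
  unfold stmt14U
  exact exp_continuous.comp ((continuous_const.mul Complex.continuous_ofReal).smul continuous_const)

lemma stmt14_norm_pow (T : H →L[ℂ] H) (k : ℕ) : ‖T ^ k‖ ≤ ‖T‖ ^ k := by
  cases k with
  | zero => simpa [ContinuousLinearMap.one_def] using ContinuousLinearMap.norm_id_le (𝕜 := ℂ) (E := H)
  | succ m => exact norm_pow_le' T (Nat.succ_pos m)

lemma stmt14_integrable_aux {E : Type*} [NormedAddCommGroup E] {f : ℝ × ℝ → E}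
    (hf : Continuous f) :
    Integrable f ((volume.restrict (Set.Icc (0:ℝ) 1)).prod (volume.restrict (Set.Icc (0:ℝ) 1))) := by
  rw [Measure.prod_restrict, ← Measure.volume_eq_prod]
  exact hf.continuousOn.integrableOn_compact (isCompact_Icc.prod isCompact_Icc)


noncomputable def stmt14cos (T : H →L[ℂ] H) (a : ℝ) : H →L[ℂ] H :=
  (2⁻¹ : ℂ) • (stmt14U T a + stmt14U T (-a))

lemma stmt14_hasSum_cos (T : H →L[ℂ] H) (a : ℝ) :
    HasSum (fun n : ℕ => (((-1:ℝ)^n * a^(2*n) / (Nat.factorial (2*n)) : ℝ) : ℂ) • T ^ (2*n))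
      (stmt14cos T a) := by
  have hU : ∀ b : ℝ, HasSum (fun k : ℕ => ((k.factorial : ℂ))⁻¹ • ((Complex.I * b) • T) ^ k)
      (stmt14U T b) := by
    intro b
    exact exp_series_hasSum_exp' (𝕂 := ℂ) _
  have h3 := ((hU a).add (hU (-a))).const_smul (2⁻¹ : ℂ)
  set f : ℕ → (H →L[ℂ] H) := fun k => (2⁻¹:ℂ) •
    (((k.factorial : ℂ))⁻¹ • ((Complex.I * a) • T)^k
      + ((k.factorial : ℂ))⁻¹ • ((Complex.I * (-a:ℝ)) • T)^k) with hf
  have hinj : Function.Injective (fun n : ℕ => 2*n) := fun x y h => by dsimp at h; omega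
  have hI : (Complex.I * ((-a : ℝ) : ℂ)) = -(Complex.I * a) := by push_cast; ring
  have hodd : ∀ k ∉ Set.range (fun n : ℕ => 2*n), f k = 0 := by
    intro k hk
    have hk' : Odd k := by
      rw [← Nat.not_even_iff_odd]
      simp only [Set.mem_range] at hk
      rintro ⟨m, hm⟩; exact hk ⟨m, by omega⟩
    rw [hf]
    simp only [hI, neg_smul, hk'.neg_pow]
    simp
  have h4 := (Function.Injective.hasSum_iff hinj hodd).mpr h3
  have heq : (fun n : ℕ => (((-1:ℝ)^n * a^(2*n) / (Nat.factorial (2*n)) : ℝ) : ℂ) • T ^ (2*n))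
      = f ∘ (fun n : ℕ => 2*n) := by
    funext n
    have hpow : ∀ b : ℂ, ((b • T)) ^ (2*n) = b^(2*n) • T ^ (2*n) := fun b => smul_pow _ _ _
    have hsq : (Complex.I * (a:ℂ))^2 = -((a:ℂ)^2) := by
      rw [mul_pow, Complex.I_sq]; ring
    have hIa : (Complex.I * (a:ℂ))^(2*n) = (((-1:ℝ)^n * a^(2*n) : ℝ) : ℂ) := by
      rw [pow_mul, hsq, neg_pow, ← pow_mul]
      push_cast; ring
    show _ = f (2*n)
    rw [hf]
    dsimp only
    rw [hI, neg_smul, Even.neg_pow (even_two_mul n) (((Complex.I * (a:ℂ))) • T), hpow, smul_smul, ← add_smul, smul_smul, hIa]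
    congr 1
    have hfac : (((2*n).factorial : ℝ)) ≠ 0 := by exact_mod_cast (2*n).factorial_ne_zero
    push_cast
    field_simp
    ring
  rw [heq]
  exact h4


lemma stmt14cos_cont (T : H →L[ℂ] H) : Continuous fun a : ℝ => stmt14cos T a := by
  unfold stmt14cos
  exact ((stmt14U_cont T).add ((stmt14U_cont T).comp continuous_neg)).const_smul (2⁻¹ : ℂ)

lemma stmt14_cos_inner (T : H →L[ℂ] H) (hT : IsSelfAdjoint T) (s t : ℝ) (w : H) :
    (⟪w, stmt14cos T (s - t) w⟫_ℂ).re = (⟪stmt14U T t w, stmt14U T s w⟫_ℂ).re := by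
  have hadj : ∀ a : ℝ, ContinuousLinearMap.adjoint (stmt14U T a) = stmt14U T (-a) := fun a => by
    rw [← ContinuousLinearMap.star_eq_adjoint, stmt14U_star T hT]
  have h1 : ⟪stmt14U T t w, stmt14U T s w⟫_ℂ = ⟪w, stmt14U T (s - t) w⟫_ℂ := by
    rw [← ContinuousLinearMap.adjoint_inner_right, hadj]
    congr 1
    have h : stmt14U T (-t) (stmt14U T s w) = (stmt14U T (-t) * stmt14U T s) w := rfl
    rw [h, stmt14U_mul]
    ring_nf
  have h3 : ⟪w, stmt14U T (-(s-t)) w⟫_ℂ = ⟪stmt14U T (s-t) w, w⟫_ℂ := by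
    rw [← hadj, ContinuousLinearMap.adjoint_inner_right]
  have h4 : (⟪stmt14U T (s-t) w, w⟫_ℂ).re = (⟪w, stmt14U T (s-t) w⟫_ℂ).re := by
    rw [← inner_conj_symm, Complex.conj_re]
  rw [h1, stmt14cos]
  simp only [ContinuousLinearMap.smul_apply, ContinuousLinearMap.add_apply, inner_smul_right,
    inner_add_right, h3]
  rw [Complex.mul_re]
  simp only [Complex.add_re, h4]
  norm_num
  ring

lemma stmt14_inner_int (n : ℕ) (x : ℝ) :
    ∫ y in Set.Icc (0:ℝ) 1, (x - y)^(2*n) = (x^(2*n+1) - (x-1)^(2*n+1)) / (2*n+1) := by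
  rw [MeasureTheory.integral_Icc_eq_integral_Ioc, ← intervalIntegral.integral_of_le zero_le_one,
    intervalIntegral.integral_comp_sub_left (fun t => t^(2*n)) x, integral_pow]
  push_cast
  norm_num

lemma stmt14_integral_pow (n : ℕ) :
    (∫ p : ℝ × ℝ, (p.1 - p.2)^(2*n)
      ∂((volume.restrict (Set.Icc (0:ℝ) 1)).prod (volume.restrict (Set.Icc (0:ℝ) 1))))
    = 2 / ((2*n+1) * (2*n+2)) := by
  rw [MeasureTheory.integral_prod _ (stmt14_integrable_aux (by fun_prop))]
  simp_rw [stmt14_inner_int n]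
  rw [MeasureTheory.integral_Icc_eq_integral_Ioc, ← intervalIntegral.integral_of_le zero_le_one,
    intervalIntegral.integral_div,
    intervalIntegral.integral_sub (intervalIntegral.intervalIntegrable_pow _)
      (Continuous.intervalIntegrable (by fun_prop : Continuous fun x : ℝ => (x-1)^(2*n+1)) _ _),
    integral_pow, intervalIntegral.integral_comp_sub_right (fun t => t^(2*n+1)) 1, integral_pow]
  have h1 : ((-1:ℝ)) ^ (2*n+1+1) = 1 := Even.neg_one_pow ⟨n+1, by ring⟩
  have h2 : (0:ℝ) ^ (2*n+1+1) = 0 := by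
    exact zero_pow (by omega)
  rw [h2]
  norm_num [h1]
  have h3 : (2*(n:ℝ)+1) ≠ 0 := by positivity
  have h4 : (2*(n:ℝ)+2) ≠ 0 := by positivity
  field_simp
  ring

end Stmt14Aux

set_option maxHeartbeats 1000000 in
set_option synthInstance.maxHeartbeats 1000000 in
/-- **operator bound, uniqueness argument of Theorem 3.1.** For a bounded
self-adjoint operator `T` on a complex Hilbert space `H`, the series
`∑ ((-1)^n/(2n+2)!) • T^{2n}` converges in operator norm to a continuous linear operator
`C = (1 - cos T)/T²`, and `0 ≤ re ⟪C w, w⟫ ≤ (1/2) ‖w‖²` for every `w`. -/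
theorem stmt14 (H : Type*) [NormedAddCommGroup H] [InnerProductSpace ℂ H] [CompleteSpace H]
    (T : H →L[ℂ] H) (hT : IsSelfAdjoint T) :
    ∃ C : H →L[ℂ] H,
      HasSum
        (fun n : ℕ => (((-1 : ℝ) ^ n / (Nat.factorial (2 * n + 2)) : ℝ) : ℂ) • T ^ (2 * n))
        C ∧
      (∀ w : H, 0 ≤ (⟪C w, w⟫_ℂ).re ∧ (⟪C w, w⟫_ℂ).re ≤ (1 / 2) * ‖w‖ ^ 2) := by
  classical
  set ν : Measure ℝ := volume.restrict (Set.Icc (0:ℝ) 1) with hν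
  haveI : IsFiniteMeasure ν := by
    constructor
    rw [hν, Measure.restrict_apply_univ]
    simp [Real.volume_Icc]
  set μ : Measure (ℝ × ℝ) := ν.prod ν with hμ
  have hμuniv : (μ Set.univ).toReal = 1 := by
    rw [hμ, ← Set.univ_prod_univ, Measure.prod_prod, hν, Measure.restrict_apply_univ]
    simp [Real.volume_Icc]
  set F : ℝ × ℝ → (H →L[ℂ] H) := fun p => (2⁻¹ : ℝ) • stmt14cos T (p.1 - p.2) with hF
  set Fn : ℕ → ℝ × ℝ → (H →L[ℂ] H) := fun n p =>
    ((2⁻¹ * ((-1:ℝ)^n / (Nat.factorial (2*n)))) * (p.1 - p.2)^(2*n)) • T ^ (2*n) with hFn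
  have hFcont : Continuous F := by
    refine Continuous.const_smul ?_ (2⁻¹ : ℝ)
    exact (stmt14cos_cont T).comp (continuous_fst.sub continuous_snd)
  have hFint : Integrable F μ := stmt14_integrable_aux hFcont
  -- pointwise HasSum
  have hps : ∀ p : ℝ × ℝ, HasSum (fun n => Fn n p) (F p) := by
    intro p
    have h := (stmt14_hasSum_cos T (p.1 - p.2)).const_smul ((2:ℝ)⁻¹)
    have he : (fun n => Fn n p)
        = fun n => (2:ℝ)⁻¹ • ((((-1:ℝ)^n * (p.1-p.2)^(2*n) / (Nat.factorial (2*n)) : ℝ) : ℂ)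
            • T ^ (2*n)) := by
      funext n
      rw [hFn]
      dsimp only
      rw [Complex.coe_smul, smul_smul]
      congr 1
      ring
    rw [he]
    exact h
  -- integrability of Fn
  have hFnint : ∀ n, Integrable (Fn n) μ := by
    intro n
    exact stmt14_integrable_aux (by fun_prop)
  -- summability of integrals of norms
  have hbound : ∀ n, (∫ p, ‖Fn n p‖ ∂μ) ≤ ‖T‖^(2*n) / (Nat.factorial (2*n)) := by
    intro n
    have hae : ∀ᵐ p ∂μ, ‖Fn n p‖ ≤ ‖T‖^(2*n) / (Nat.factorial (2*n)) := by
      have hmem : ∀ᵐ p ∂μ, p ∈ (Set.Icc (0:ℝ) 1) ×ˢ (Set.Icc (0:ℝ) 1) := by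
        rw [hμ, hν, Measure.prod_restrict]
        exact ae_restrict_mem (measurableSet_Icc.prod measurableSet_Icc)
      filter_upwards [hmem] with p hp
      obtain ⟨⟨h10, h11⟩, ⟨h20, h21⟩⟩ := hp
      have habs : |p.1 - p.2| ≤ 1 := by rw [abs_sub_le_iff]; constructor <;> linarith
      have hfac : (0:ℝ) < (Nat.factorial (2*n) : ℝ) := by
        exact_mod_cast (Nat.factorial_pos _)
      rw [hFn]
      dsimp only
      rw [norm_smul, Real.norm_eq_abs]
      have h1 : |2⁻¹ * ((-1:ℝ)^n / (Nat.factorial (2*n))) * (p.1 - p.2)^(2*n)|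
          ≤ (Nat.factorial (2*n) : ℝ)⁻¹ := by
        rw [abs_mul, abs_mul, abs_div, abs_pow, abs_pow, abs_neg, abs_one, one_pow]
        have h2 : |p.1 - p.2|^(2*n) ≤ 1 := pow_le_one₀ (abs_nonneg _) habs
        rw [abs_of_nonneg hfac.le, abs_of_nonneg (by norm_num : (0:ℝ) ≤ 2⁻¹)]
        have h2' : (0:ℝ) ≤ |p.1 - p.2|^(2*n) := pow_nonneg (abs_nonneg _) _
        have hinv : (0:ℝ) < ((Nat.factorial (2*n)) : ℝ)⁻¹ := by positivity
        rw [one_div]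
        nlinarith [mul_le_mul_of_nonneg_left h2 hinv.le]
      calc |2⁻¹ * ((-1:ℝ)^n / (Nat.factorial (2*n))) * (p.1 - p.2)^(2*n)| * ‖T ^ (2*n)‖
          ≤ (Nat.factorial (2*n) : ℝ)⁻¹ * ‖T‖^(2*n) :=
            mul_le_mul h1 (stmt14_norm_pow T _) (norm_nonneg _) (by positivity)
        _ = ‖T‖^(2*n) / (Nat.factorial (2*n)) := by ring
    calc (∫ p, ‖Fn n p‖ ∂μ) ≤ ∫ _, ‖T‖^(2*n) / (Nat.factorial (2*n)) ∂μ :=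
          integral_mono_ae (hFnint n).norm (integrable_const _) hae
      _ = ‖T‖^(2*n) / (Nat.factorial (2*n)) := by
          rw [integral_const, measureReal_def, hμuniv, one_smul]
  have hsumnorm : Summable (fun n => ∫ p, ‖Fn n p‖ ∂μ) := by
    apply Summable.of_nonneg_of_le
      (fun n => integral_nonneg (fun p => norm_nonneg _)) hbound
    have h := (Real.summable_pow_div_factorial ‖T‖).comp_injective
      (fun x y h => by dsimp at h; omega : Function.Injective (fun n : ℕ => 2*n))
    exact h
  -- the key HasSum
  have hkey := hasSum_integral_of_summable_integral_norm hFnint hsumnorm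
  have htsum : (fun p => ∑' n, Fn n p) = F := by
    funext p; exact (hps p).tsum_eq
  rw [htsum] at hkey
  -- value of each integral
  have hval : ∀ n, (∫ p, Fn n p ∂μ)
      = (((-1:ℝ)^n / (Nat.factorial (2*n+2)) : ℝ)) • T ^ (2*n) := by
    intro n
    rw [hFn]
    dsimp only
    rw [integral_smul_const, integral_const_mul, stmt14_integral_pow n]
    congr 1
    have hf1 : (Nat.factorial (2*n+2) : ℝ)
        = (2*n+2) * ((2*n+1) * (Nat.factorial (2*n))) := by
      have : 2*n+2 = (2*n+1)+1 := by omega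
      rw [this, Nat.factorial_succ, Nat.factorial_succ]
      push_cast; ring
    have hfac : ((Nat.factorial (2*n)):ℝ) ≠ 0 := by
      exact_mod_cast (Nat.factorial_ne_zero _)
    have h3 : (2*(n:ℝ)+1) ≠ 0 := by positivity
    have h4 : (2*(n:ℝ)+2) ≠ 0 := by positivity
    rw [hf1]
    push_cast
    field_simp
  have hkey2 : HasSum
      (fun n : ℕ => (((-1 : ℝ) ^ n / (Nat.factorial (2 * n + 2)) : ℝ) : ℂ) • T ^ (2 * n))
      (∫ p, F p ∂μ) := by
    have he : (fun n : ℕ => (((-1 : ℝ) ^ n / (Nat.factorial (2 * n + 2)) : ℝ) : ℂ) • T ^ (2 * n))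
        = fun n => ∫ p, Fn n p ∂μ := by
      funext n
      rw [hval n, Complex.coe_smul]
    rw [he]
    exact hkey
  refine ⟨∫ p, F p ∂μ, hkey2, ?_⟩
  intro w
  set C : H →L[ℂ] H := ∫ p, F p ∂μ with hC
  set g : ℝ → H := fun a => stmt14U T a w with hg
  have hgcont : Continuous g := by
    rw [hg]
    exact (ContinuousLinearMap.apply ℂ H w).continuous.comp (stmt14U_cont T)
  have hgint : Integrable g ν := by
    rw [hν]
    exact hgcont.continuousOn.integrableOn_compact isCompact_Icc
  -- the functional L
  set L : (H →L[ℂ] H) →L[ℝ] ℝ :=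
    (Complex.reCLM.comp ((innerSL ℂ w).restrictScalars ℝ)).comp
      ((ContinuousLinearMap.apply ℂ H w).restrictScalars ℝ) with hL
  have hLapp : ∀ A : H →L[ℂ] H, L A = (⟪w, A w⟫_ℂ).re := fun A => rfl
  have hre : (⟪C w, w⟫_ℂ).re = L C := by
    rw [hLapp, ← inner_conj_symm w (C w), Complex.conj_re]
  have hLC : L C = ∫ p, L (F p) ∂μ := by
    rw [hC]
    exact (L.integral_comp_comm hFint).symm
  have hLF : ∀ p : ℝ × ℝ, L (F p) = 2⁻¹ * (⟪g p.2, g p.1⟫_ℂ).re := by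
    intro p
    rw [hF, hLapp]
    dsimp only
    rw [ContinuousLinearMap.smul_apply, ← Complex.coe_smul, inner_smul_right,
      Complex.re_ofReal_mul, stmt14_cos_inner T hT p.1 p.2 w]
  have hintg : Integrable (fun p => L (F p)) μ := L.integrable_comp hFint
  have hintg2 : Integrable (fun p : ℝ × ℝ => 2⁻¹ * (⟪g p.2, g p.1⟫_ℂ).re) μ := by
    have he : (fun p : ℝ × ℝ => 2⁻¹ * (⟪g p.2, g p.1⟫_ℂ).re) = fun p => L (F p) := by
      funext p; rw [hLF]
    rw [he]; exact hintg
  have hI : (⟪C w, w⟫_ℂ).re = ∫ p, 2⁻¹ * (⟪g p.2, g p.1⟫_ℂ).re ∂μ := by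
    rw [hre, hLC]
    exact integral_congr_ae (Filter.Eventually.of_forall fun p => (hLF p))
  have hresymm : ∀ x y : H, (⟪x, y⟫_ℂ).re = (⟪y, x⟫_ℂ).re := fun x y => by
    rw [← inner_conj_symm, Complex.conj_re]
  constructor
  · -- lower bound
    rw [hI]
    have hintg3 : Integrable (fun p : ℝ × ℝ => (⟪g p.2, g p.1⟫_ℂ).re) μ := by
      apply stmt14_integrable_aux
      exact Complex.continuous_re.comp
        (Continuous.inner (hgcont.comp continuous_snd) (hgcont.comp continuous_fst))
    have hinner : ∀ x : ℝ, ∫ y, (⟪g y, g x⟫_ℂ).re ∂ν = (⟪g x, ∫ a, g a ∂ν⟫_ℂ).re := by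
      intro x
      have h1 : ∀ y : ℝ, (⟪g y, g x⟫_ℂ).re
          = (Complex.reCLM.comp ((innerSL ℂ (g x)).restrictScalars ℝ)) (g y) := by
        intro y; rw [hresymm]; rfl
      simp_rw [h1]
      rw [ContinuousLinearMap.integral_comp_comm _ hgint]
      rfl
    rw [integral_const_mul]
    apply mul_nonneg (by norm_num)
    rw [hμ, integral_prod _ hintg3]
    simp_rw [hinner]
    set v : H := ∫ a, g a ∂ν with hv
    have h2 : ∀ x : ℝ, (⟪g x, v⟫_ℂ).re
        = (Complex.reCLM.comp ((innerSL ℂ v).restrictScalars ℝ)) (g x) := by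
      intro x; rw [hresymm]; rfl
    simp_rw [h2]
    rw [ContinuousLinearMap.integral_comp_comm _ hgint]
    have h3 : (Complex.reCLM.comp ((innerSL ℂ v).restrictScalars ℝ)) (∫ a, g a ∂ν)
        = (⟪v, v⟫_ℂ).re := rfl
    rw [h3]
    have h4 := inner_self_nonneg (𝕜 := ℂ) (x := v)
    rwa [RCLike.re_to_complex] at h4
  · -- upper bound
    rw [hI]
    have hgnorm : ∀ a : ℝ, ‖g a‖ = ‖w‖ := fun a => stmt14U_norm T hT a w
    calc ∫ p, 2⁻¹ * (⟪g p.2, g p.1⟫_ℂ).re ∂μ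
        ≤ ∫ _, 2⁻¹ * ‖w‖^2 ∂μ := by
          apply integral_mono hintg2 (integrable_const _)
          intro p
          have h5 := re_inner_le_norm (𝕜 := ℂ) (g p.2) (g p.1)
          rw [RCLike.re_to_complex, hgnorm, hgnorm] at h5
          have h6 : (⟪g p.2, g p.1⟫_ℂ).re ≤ ‖w‖^2 := by nlinarith [h5]
          nlinarith [h6]
      _ = 2⁻¹ * ‖w‖^2 := by rw [integral_const, measureReal_def, hμuniv, one_smul]
      _ = (1/2) * ‖w‖^2 := by norm_num
end

section
/- (Positivity of sin(ad(itb))/ad(itb) used in the proof of Theorem 3.1.) Assume ‖T‖ ≤ π. Then the series ∑_{n=0}^∞ ((−1)^n/(2n+1)!) • T^{2n} converges in the operator norm to a continuous linear operator S (the operator sin(T)/T), and for every w ∈ H one has re ⟪S w, w⟫ ≥ 0. -/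
open scoped InnerProductSpace

private lemma stmt15_summable_aux (c : ℝ) (hc : 0 ≤ c) :
    Summable (fun n : ℕ => c ^ (2 * n) / (Nat.factorial (2 * n + 1) : ℝ)) := by
  refine Summable.of_nonneg_of_le (fun n => by positivity) (fun n => ?_)
    (Real.summable_pow_div_factorial (c ^ 2))
  have h1 : c ^ (2 * n) = (c ^ 2) ^ n := by rw [← pow_mul, mul_comm]
  have h2 : (Nat.factorial n : ℝ) ≤ (Nat.factorial (2 * n + 1) : ℝ) := by
    exact_mod_cast Nat.factorial_le (by omega)
  rw [h1]
  exact div_le_div_of_nonneg_left (by positivity) (by positivity) h2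

private lemma stmt15_summable {A : Type*} [NormedRing A] [NormedAlgebra ℝ A]
    [CompleteSpace A] (x : A) :
    Summable (fun n : ℕ => (((-1 : ℝ) ^ n / (Nat.factorial (2 * n + 1)) : ℝ)) • x ^ (2 * n)) := by
  set M : ℝ := max 1 ‖(1 : A)‖ with hM
  have hM1 : (1 : ℝ) ≤ M := le_max_left _ _
  refine Summable.of_norm_bounded
    (g := fun n => M * (‖x‖ ^ (2 * n) / (Nat.factorial (2 * n + 1) : ℝ))) ?_ (fun n => ?_)
  · exact (stmt15_summable_aux ‖x‖ (norm_nonneg x)).mul_left M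
  · have hpow : ‖x ^ (2 * n)‖ ≤ M * ‖x‖ ^ (2 * n) := by
      rcases Nat.eq_zero_or_pos n with hn | hn
      · subst hn
        simp only [mul_zero, pow_zero, mul_one]
        exact le_max_right 1 ‖(1 : A)‖
      · refine (norm_pow_le' x (by omega)).trans ?_
        exact le_mul_of_one_le_left (by positivity) hM1
    have habs : |(-1 : ℝ) ^ n / (Nat.factorial (2 * n + 1) : ℝ)|
        = 1 / (Nat.factorial (2 * n + 1) : ℝ) := by
      rw [abs_div, abs_pow, abs_neg, abs_one, one_pow, abs_of_nonneg (by positivity)]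
    calc ‖(((-1 : ℝ) ^ n / (Nat.factorial (2 * n + 1)) : ℝ)) • x ^ (2 * n)‖
        = |(-1 : ℝ) ^ n / (Nat.factorial (2 * n + 1) : ℝ)| * ‖x ^ (2 * n)‖ := by
          rw [norm_smul, Real.norm_eq_abs]
      _ ≤ (1 / (Nat.factorial (2 * n + 1) : ℝ)) * (M * ‖x‖ ^ (2 * n)) := by
          rw [habs]; exact mul_le_mul_of_nonneg_left hpow (by positivity)
      _ = M * (‖x‖ ^ (2 * n) / (Nat.factorial (2 * n + 1) : ℝ)) := by ring

/-- **positivity of `sin(ad(itb))/ad(itb)`, proof of Theorem 3.1.** For a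
bounded self-adjoint operator `T` on a complex Hilbert space `H` with `‖T‖ ≤ π`, the series
`∑ ((-1)^n/(2n+1)!) • T^{2n}` converges in operator norm to a continuous linear operator
`S = sin(T)/T`, and `re ⟪S w, w⟫ ≥ 0` for every `w`. -/
theorem stmt15 (H : Type*) [NormedAddCommGroup H] [InnerProductSpace ℂ H] [CompleteSpace H]
    (T : H →L[ℂ] H) (hT : IsSelfAdjoint T) (hTnorm : ‖T‖ ≤ Real.pi) :
    ∃ S : H →L[ℂ] H,
      HasSum
        (fun n : ℕ => (((-1 : ℝ) ^ n / (Nat.factorial (2 * n + 1)) : ℝ) : ℂ) • T ^ (2 * n))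
        S ∧
      (∀ w : H, 0 ≤ (⟪S w, w⟫_ℂ).re) := by
  rcases subsingleton_or_nontrivial H with hH | hH
  · refine ⟨∑' n : ℕ, (((-1 : ℝ) ^ n / (Nat.factorial (2 * n + 1)) : ℝ)) • T ^ (2 * n), ?_, ?_⟩
    · have := (stmt15_summable T).hasSum
      simpa only [Complex.coe_smul] using this
    · intro w
      have hw : w = 0 := Subsingleton.elim w 0
      simp [hw]
  · -- main case
    let X : C(spectrum ℝ T, ℝ) := (ContinuousMap.id ℝ).restrict (spectrum ℝ T)
    have hXsum : Summable (fun n : ℕ =>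
        (((-1 : ℝ) ^ n / (Nat.factorial (2 * n + 1)) : ℝ)) • X ^ (2 * n)) :=
      stmt15_summable X
    set G : C(spectrum ℝ T, ℝ) :=
      ∑' n : ℕ, (((-1 : ℝ) ^ n / (Nat.factorial (2 * n + 1)) : ℝ)) • X ^ (2 * n) with hGdef
    have hGsum : HasSum (fun n : ℕ =>
        (((-1 : ℝ) ^ n / (Nat.factorial (2 * n + 1)) : ℝ)) • X ^ (2 * n)) G := hXsum.hasSum
    have hGapply : ∀ x : spectrum ℝ T,
        HasSum (fun n : ℕ =>
          ((-1 : ℝ) ^ n / (Nat.factorial (2 * n + 1)) : ℝ) * (x : ℝ) ^ (2 * n)) (G x) := by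
      intro x
      have := hGsum.map (ContinuousMap.evalCLM ℝ x) (ContinuousMap.evalCLM ℝ x).continuous
      simpa [ContinuousMap.evalCLM, X, Function.comp_def] using this
    have hGpos : ∀ x : spectrum ℝ T, 0 ≤ G x := by
      rintro ⟨x, hx⟩
      have hxpi : |x| ≤ Real.pi := by
        have := spectrum.norm_le_norm_of_mem hx
        rw [Real.norm_eq_abs] at this
        exact this.trans hTnorm
      rcases eq_or_ne x 0 with hx0 | hx0
      · have h0 : HasSum (fun n : ℕ =>
            ((-1 : ℝ) ^ n / (Nat.factorial (2 * n + 1)) : ℝ) * (x : ℝ) ^ (2 * n))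
            ((-1 : ℝ) ^ 0 / (Nat.factorial (2 * 0 + 1)) * x ^ (2 * 0)) := by
          refine hasSum_single 0 (fun n hn => ?_)
          have : x ^ (2 * n) = 0 := by
            rw [hx0]; exact zero_pow (by omega)
          simp [this]
        have := (hGapply ⟨x, hx⟩).unique h0
        simp only [this]
        norm_num
      · have hmul : HasSum (fun n : ℕ =>
            (-1 : ℝ) ^ n * x ^ (2 * n + 1) / (Nat.factorial (2 * n + 1))) (x * G ⟨x, hx⟩) := by
          have := (hGapply ⟨x, hx⟩).mul_left x
          have hfun : (fun n : ℕ => (-1 : ℝ) ^ n * x ^ (2 * n + 1) / (Nat.factorial (2 * n + 1)))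
              = fun i => x * (((-1 : ℝ) ^ i / (Nat.factorial (2 * i + 1)) : ℝ)
                * ((⟨x, hx⟩ : spectrum ℝ T) : ℝ) ^ (2 * i)) := by
            funext n
            rw [pow_succ]
            ring
          rw [hfun]
          exact this
        have hs : x * G ⟨x, hx⟩ = Real.sin x := hmul.unique (Real.hasSum_sin x)
        have hG : G ⟨x, hx⟩ = Real.sin x / x := by
          field_simp [hx0] at hs ⊢
          linarith [hs]
        rw [hG]
        rcases lt_or_gt_of_ne hx0 with hneg | hpos
        · have h1 : Real.sin x ≤ 0 := by
            have : Real.sin (-x) ≥ 0 :=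
              Real.sin_nonneg_of_nonneg_of_le_pi (by linarith) (by rw [abs_of_neg hneg] at hxpi; linarith)
            rw [Real.sin_neg] at this
            linarith
          rw [← neg_div_neg_eq]
          exact div_nonneg (by linarith) (by linarith)
        · have h1 : 0 ≤ Real.sin x :=
            Real.sin_nonneg_of_nonneg_of_le_pi hpos.le (by rw [abs_of_pos hpos] at hxpi; linarith)
          exact div_nonneg h1 hpos.le
    -- square root of G
    let g : C(spectrum ℝ T, ℝ) := ⟨fun x => Real.sqrt (G x),
      Real.continuous_sqrt.comp G.continuous⟩
    have hg2 : g * g = G := by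
      ext x
      exact Real.mul_self_sqrt (hGpos x)
    let B : H →L[ℂ] H := cfcHom (R := ℝ) hT g
    have hBsa : IsSelfAdjoint B := by
      rw [IsSelfAdjoint, ← map_star]
      congr 1
    have hSB : cfcHom (R := ℝ) hT G = B * B := by
      rw [← hg2, map_mul]
    refine ⟨cfcHom (R := ℝ) hT G, ?_, ?_⟩
    · have := hGsum.map (cfcHom (R := ℝ) hT)
        (cfcHom_isClosedEmbedding (R := ℝ) hT).continuous
      simp only [Function.comp_def, map_smul, map_pow, X, cfcHom_id (R := ℝ) hT] at this
      simpa only [Complex.coe_smul] using this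
    · intro w
      have key : (⟪cfcHom (R := ℝ) hT G w, w⟫_ℂ) = ⟪B w, B w⟫_ℂ := by
        rw [hSB]
        calc (⟪(B * B) w, w⟫_ℂ) = ⟪B (B w), w⟫_ℂ := rfl
          _ = ⟪(ContinuousLinearMap.adjoint B) (B w), w⟫_ℂ := by rw [hBsa.adjoint_eq]
          _ = ⟪B w, B w⟫_ℂ := ContinuousLinearMap.adjoint_inner_left B w (B w)
      rw [key]
      simpa [← RCLike.re_to_complex] using inner_self_nonneg (𝕜 := ℂ) (x := B w)
end
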